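/- Every finite simple undirected graph on n vertices with strictly more than 2n edges contains a cycle of length at most 2·log₂ n. -/

import Mathlib

namespace ShortCycleAux

variable {V : Type*}

lemma isPath_concat {G : SimpleGraph V} {u v w : V} {p : G.Walk u v} (hp : p.IsPath)
    (h : G.Adj v w) (hw : w ∉ p.support) : (p.concat h).IsPath := by
  rw [← SimpleGraph.Walk.isPath_reverse_iff, SimpleGraph.Walk.reverse_concat]
  exact SimpleGraph.Walk.IsPath.cons hp.reverse
    (by simpa [SimpleGraph.Walk.support_reverse] using hw)

lemma dist_le_of_mem_support {G : SimpleGraph V} [DecidableEq V] {v w y : V}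
    (p : G.Walk v w) (hy : y ∈ p.support) : G.dist v y ≤ p.length :=
  le_trans (SimpleGraph.dist_le (p.takeUntil y hy)) (p.length_takeUntil_le hy)

lemma dist_lt_of_mem_support {G : SimpleGraph V} [DecidableEq V] {v w y : V}
    (p : G.Walk v w) (hy : y ∈ p.support) (hne : y ≠ w) : G.dist v y < p.length := by
  have h1 : G.dist v y ≤ (p.takeUntil y hy).length := SimpleGraph.dist_le _
  have h2 : (p.takeUntil y hy).length + (p.dropUntil y hy).length = p.length := by
    rw [← SimpleGraph.Walk.length_append, p.take_spec hy]
  have h3 : (p.dropUntil y hy).length ≠ 0 :=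
    fun h0 => hne (SimpleGraph.Walk.eq_of_length_eq_zero h0)
  omega

lemma exists_cycle_le {G : SimpleGraph V} {a b : V} {p q : G.Walk a b}
    (hp : p.IsPath) (hq : q.IsPath) (hne : p ≠ q) :
    ∃ (x : V) (c : G.Walk x x), c.IsCycle ∧ c.length ≤ p.length + q.length := by
  classical
  set s : Set (Sym2 V) := {e | e ∈ p.edges ∨ e ∈ q.edges} with hs
  set H : SimpleGraph V := SimpleGraph.fromEdgeSet s with hH
  have hsG : s ⊆ G.edgeSet := by
    rintro e (he | he)
    · exact p.edges_subset_edgeSet he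
    · exact q.edges_subset_edgeSet he
  have hpe : ∀ e ∈ p.edges, e ∈ H.edgeSet := by
    intro e he
    rw [hH, SimpleGraph.edgeSet_fromEdgeSet]
    exact ⟨Or.inl he, SimpleGraph.not_isDiag_of_mem_edgeSet G (p.edges_subset_edgeSet he)⟩
  have hqe : ∀ e ∈ q.edges, e ∈ H.edgeSet := by
    intro e he
    rw [hH, SimpleGraph.edgeSet_fromEdgeSet]
    exact ⟨Or.inr he, SimpleGraph.not_isDiag_of_mem_edgeSet G (q.edges_subset_edgeSet he)⟩
  have hHe : H.edgeSet ⊆ s := by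
    rw [hH, SimpleGraph.edgeSet_fromEdgeSet]; exact Set.diff_subset
  have hnac : ¬ H.IsAcyclic := by
    rw [SimpleGraph.isAcyclic_iff_path_unique]
    push_neg
    refine ⟨a, b, ⟨p.transfer H hpe, hp.transfer hpe⟩, ⟨q.transfer H hqe, hq.transfer hqe⟩, ?_⟩
    intro hcontr
    apply hne
    have h1 : p.transfer H hpe = q.transfer H hqe := congrArg Subtype.val hcontr
    have h2 := congrArg (fun w : H.Walk a b =>
      w.transfer G (fun e he => hsG (hHe (w.edges_subset_edgeSet he)))) h1
    simpa [SimpleGraph.Walk.transfer_transfer, SimpleGraph.Walk.transfer_self] using h2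
  rw [SimpleGraph.IsAcyclic] at hnac
  push_neg at hnac
  obtain ⟨x, c, hc⟩ := hnac
  have hce : ∀ e ∈ c.edges, e ∈ G.edgeSet := fun e he => hsG (hHe (c.edges_subset_edgeSet he))
  refine ⟨x, c.transfer G hce, hc.transfer hce, ?_⟩
  rw [SimpleGraph.Walk.length_transfer]
  have hnodup : c.edges.Nodup := hc.edges_nodup
  have hsubl : c.edges ⊆ p.edges ++ q.edges := by
    intro e he
    rcases hHe (c.edges_subset_edgeSet he) with h | h
    · exact List.mem_append.mpr (Or.inl h)
    · exact List.mem_append.mpr (Or.inr h)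
  calc c.length = c.edges.length := (c.length_edges).symm
    _ = c.edges.toFinset.card := (List.toFinset_card_of_nodup hnodup).symm
    _ ≤ (p.edges ++ q.edges).toFinset.card := by
        apply Finset.card_le_card
        intro e he
        rw [List.mem_toFinset] at he ⊢
        exact hsubl he
    _ ≤ (p.edges ++ q.edges).length := List.toFinset_card_le _
    _ = p.length + q.length := by
        rw [List.length_append, p.length_edges, q.length_edges]

lemma two_ext {G : SimpleGraph V} {v u w1 w2 : V} (h1 : G.Adj w1 u) (h2 : G.Adj w2 u)
    (hw : w1 ≠ w2) {p1 : G.Walk v w1} {p2 : G.Walk v w2} (hp1 : p1.IsPath) (hp2 : p2.IsPath)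
    (hu1 : u ∉ p1.support) (hu2 : u ∉ p2.support) :
    ∃ (x : V) (c : G.Walk x x), c.IsCycle ∧ c.length ≤ p1.length + p2.length + 2 := by
  have q1 := isPath_concat hp1 h1 hu1
  have q2 := isPath_concat hp2 h2 hu2
  have hne : p1.concat h1 ≠ p2.concat h2 := by
    intro hcontr
    have he : s(w1, u) ∈ (p2.concat h2).edges := by
      rw [← hcontr, SimpleGraph.Walk.edges_concat]
      simp
    rw [SimpleGraph.Walk.edges_concat, List.concat_eq_append, List.mem_append] at he
    rcases he with he | he
    · exact hu2 (SimpleGraph.Walk.fst_mem_support_of_mem_edges p2 (by rwa [Sym2.eq_swap]))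
    · simp at he
      rcases he with h | ⟨h, -⟩
      · exact hw h
      · exact h1.ne h
  obtain ⟨x, c, hc, hlen⟩ := exists_cycle_le q1 q2 hne
  refine ⟨x, c, hc, ?_⟩
  rw [SimpleGraph.Walk.length_concat, SimpleGraph.Walk.length_concat] at hlen
  omega

lemma core [Fintype V] [DecidableEq V] (G' : SimpleGraph V) [DecidableRel G'.Adj]
    (T : Finset V)
    (hadjT : ∀ a b, G'.Adj a b → a ∈ T)
    (hdeg : ∀ a ∈ T, 3 ≤ (Finset.univ.filter (G'.Adj a)).card)
    {v : V} (hv : v ∈ T) {k : ℕ} (hk : 1 ≤ k)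
    (NC : ∀ (x : V) (c : G'.Walk x x), c.IsCycle → ¬(c.length ≤ 2 * k)) :
    2 ^ (k + 1) ≤ Fintype.card V := by
  classical
  set L : ℕ → Finset V := fun i =>
    Finset.univ.filter (fun x => G'.Reachable v x ∧ G'.dist v x = i) with hLdef
  have memL : ∀ i x, x ∈ L i ↔ G'.Reachable v x ∧ G'.dist v x = i := by
    intro i x; simp [hLdef]
  have keyT : ∀ (a b : V), G'.Walk a b → a ∈ T → b ∈ T := by
    intro a b w
    induction w with
    | nil => exact id
    | cons h p ih => intro _; exact ih (hadjT _ _ h.symm)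
  have hT : ∀ x, G'.Reachable v x → x ∈ T := fun x hr => keyT v x hr.some hv
  have hL0 : L 0 = {v} := by
    ext x
    rw [memL, Finset.mem_singleton]
    constructor
    · rintro ⟨hr, hd⟩; exact (hr.dist_eq_zero_iff.mp hd).symm
    · rintro rfl; exact ⟨SimpleGraph.Reachable.refl _, SimpleGraph.dist_self⟩
  have hdistle : ∀ {a b : V}, G'.Reachable v a → G'.Adj a b →
      G'.dist v b ≤ G'.dist v a + 1 := by
    intro a b hr hab
    obtain ⟨p, hp, hlen⟩ := hr.exists_path_of_dist
    calc G'.dist v b ≤ (p.concat hab).length := SimpleGraph.dist_le _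
      _ = G'.dist v a + 1 := by rw [SimpleGraph.Walk.length_concat, hlen]
  -- growth step
  have grow : ∀ i, i < k → 2 * (L i).card ≤ (L (i + 1)).card := by
    intro i hik
    have husub : ∀ u ∈ L i, 2 ≤ ((Finset.univ.filter (G'.Adj u)) ∩ L (i + 1)).card := by
      intro u hu
      rw [memL] at hu
      obtain ⟨hru, hdu⟩ := hu
      have huT : u ∈ T := hT u hru
      set N := Finset.univ.filter (G'.Adj u) with hNdef
      have hN3 : 3 ≤ N.card := hdeg u huT
      have hadjN : ∀ w ∈ N, G'.Adj u w := by intro w hw; simpa [hNdef] using hw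
      have hNL : ∀ w ∈ N, w ∈ L (i + 1) ∨ w ∈ L i ∨ w ∈ L (i - 1) := by
        intro w hw
        have haw := hadjN w hw
        have hrw : G'.Reachable v w := hru.trans haw.reachable
        have h1 : G'.dist v w ≤ i + 1 := hdu ▸ hdistle hru haw
        have h2 : G'.dist v u ≤ G'.dist v w + 1 := hdistle hrw haw.symm
        rw [memL, memL, memL]
        rw [hdu] at h2
        have : G'.dist v w = i + 1 ∨ G'.dist v w = i ∨ G'.dist v w = i - 1 := by omega
        tauto
      -- no neighbors at the same level
      have hLi : ∀ w ∈ N, w ∉ L i := by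
        intro w hw hwi
        have haw := hadjN w hw
        rw [memL] at hwi
        obtain ⟨hrw, hdw⟩ := hwi
        obtain ⟨p1, hp1, hl1⟩ := hru.exists_path_of_dist
        obtain ⟨p2, hp2, hl2⟩ := hrw.exists_path_of_dist
        rw [hdu] at hl1
        rw [hdw] at hl2
        have hus : u ∉ p2.support := by
          intro hmem
          have := dist_lt_of_mem_support p2 hmem haw.ne
          omega
        obtain ⟨x, c, hc, hlen⟩ := exists_cycle_le hp1 (isPath_concat hp2 haw.symm hus)
          (by
            intro hcontr
            have := congrArg SimpleGraph.Walk.length hcontr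
            rw [SimpleGraph.Walk.length_concat, hl1, hl2] at this
            omega)
        rw [SimpleGraph.Walk.length_concat, hl1, hl2] at hlen
        exact NC x c hc (by omega)
      -- at most one neighbor one level down
      have hLd : (N ∩ L (i - 1)).card ≤ 1 := by
        rcases Nat.eq_zero_or_pos i with hi0 | hipos
        · subst hi0
          calc (N ∩ L (0 - 1)).card ≤ (L 0).card := Finset.card_le_card (Finset.inter_subset_right)
            _ = 1 := by rw [hL0, Finset.card_singleton]
        · rw [Finset.card_le_one]
          intro w1 hw1 w2 hw2
          by_contra hne12
          obtain ⟨hw1N, hw1L⟩ := Finset.mem_inter.mp hw1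
          obtain ⟨hw2N, hw2L⟩ := Finset.mem_inter.mp hw2
          rw [memL] at hw1L hw2L
          obtain ⟨hr1, hd1⟩ := hw1L
          obtain ⟨hr2, hd2⟩ := hw2L
          obtain ⟨p1, hp1, hl1⟩ := hr1.exists_path_of_dist
          obtain ⟨p2, hp2, hl2⟩ := hr2.exists_path_of_dist
          rw [hd1] at hl1
          rw [hd2] at hl2
          have hus1 : u ∉ p1.support := by
            intro hmem
            have := dist_le_of_mem_support p1 hmem
            omega
          have hus2 : u ∉ p2.support := by
            intro hmem
            have := dist_le_of_mem_support p2 hmem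
            omega
          obtain ⟨x, c, hc, hlen⟩ := two_ext (hadjN w1 hw1N).symm (hadjN w2 hw2N).symm
            hne12 hp1 hp2 hus1 hus2
          rw [hl1, hl2] at hlen
          exact NC x c hc (by omega)
      have hsub : N ⊆ (N ∩ L (i + 1)) ∪ (N ∩ L (i - 1)) := by
        intro w hw
        rcases hNL w hw with h | h | h
        · exact Finset.mem_union_left _ (Finset.mem_inter.mpr ⟨hw, h⟩)
        · exact absurd h (hLi w hw)
        · exact Finset.mem_union_right _ (Finset.mem_inter.mpr ⟨hw, h⟩)
      have := Finset.card_le_card hsub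
      have := Finset.card_union_le (N ∩ L (i + 1)) (N ∩ L (i - 1))
      omega
    -- disjointness of neighbor sets
    have hdisj : ∀ u1 ∈ L i, ∀ u2 ∈ L i, u1 ≠ u2 →
        Disjoint ((Finset.univ.filter (G'.Adj u1)) ∩ L (i + 1))
          ((Finset.univ.filter (G'.Adj u2)) ∩ L (i + 1)) := by
      intro u1 h1 u2 h2 hne
      rw [Finset.disjoint_left]
      intro w hw1 hw2
      obtain ⟨hw1N, hwL⟩ := Finset.mem_inter.mp hw1
      obtain ⟨hw2N, -⟩ := Finset.mem_inter.mp hw2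
      have ha1 : G'.Adj u1 w := by simpa using hw1N
      have ha2 : G'.Adj u2 w := by simpa using hw2N
      rw [memL] at h1 h2 hwL
      obtain ⟨hr1, hd1⟩ := h1
      obtain ⟨hr2, hd2⟩ := h2
      obtain ⟨hrw, hdw⟩ := hwL
      obtain ⟨p1, hp1, hl1⟩ := hr1.exists_path_of_dist
      obtain ⟨p2, hp2, hl2⟩ := hr2.exists_path_of_dist
      rw [hd1] at hl1
      rw [hd2] at hl2
      have hus1 : w ∉ p1.support := by
        intro hmem
        have := dist_le_of_mem_support p1 hmem
        omega
      have hus2 : w ∉ p2.support := by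
        intro hmem
        have := dist_le_of_mem_support p2 hmem
        omega
      obtain ⟨x, c, hc, hlen⟩ := two_ext ha1 ha2 hne hp1 hp2 hus1 hus2
      rw [hl1, hl2] at hlen
      exact NC x c hc (by omega)
    calc 2 * (L i).card = ∑ _u ∈ L i, 2 := by
          rw [Finset.sum_const, smul_eq_mul, mul_comm]
      _ ≤ ∑ u ∈ L i, ((Finset.univ.filter (G'.Adj u)) ∩ L (i + 1)).card :=
          Finset.sum_le_sum husub
      _ = ((L i).biUnion fun u => (Finset.univ.filter (G'.Adj u)) ∩ L (i + 1)).card :=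
          (Finset.card_biUnion hdisj).symm
      _ ≤ (L (i + 1)).card := by
          apply Finset.card_le_card
          intro w hw
          obtain ⟨u, -, hwu⟩ := Finset.mem_biUnion.mp hw
          exact (Finset.mem_inter.mp hwu).2
  -- first layer
  have hL1 : 3 ≤ (L 1).card := by
    refine le_trans (hdeg v hv) (Finset.card_le_card ?_)
    intro w hw
    have haw : G'.Adj v w := by simpa using hw
    rw [memL]
    refine ⟨haw.reachable, ?_⟩
    have h1 : G'.dist v w ≤ 1 := by
      have := hdistle (SimpleGraph.Reachable.refl v) haw
      rwa [SimpleGraph.dist_self] at this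
    have h2 : G'.dist v w ≠ 0 := by
      intro h0
      exact haw.ne (haw.reachable.dist_eq_zero_iff.mp h0)
    omega
  have hLbound : ∀ i, 1 ≤ i → i ≤ k → 3 * 2 ^ (i - 1) ≤ (L i).card := by
    intro i
    induction i with
    | zero => omega
    | succ n ih =>
      intro h1 h2
      rcases Nat.eq_zero_or_pos n with hn0 | hnpos
      · subst hn0; simpa using hL1
      · have hb := ih hnpos (by omega)
        have hg := grow n (by omega)
        have hpow : 3 * 2 ^ (n + 1 - 1) = 2 * (3 * 2 ^ (n - 1)) := by
          obtain ⟨m, rfl⟩ : ∃ m, n = m + 1 := ⟨n - 1, by omega⟩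
          simp [pow_succ]
          ring
        omega
  -- final count
  have hdisj2 : Disjoint (L (k - 1)) (L k) := by
    rw [Finset.disjoint_left]
    intro x hx1 hx2
    rw [memL] at hx1 hx2
    omega
  have htot : (L (k - 1)).card + (L k).card ≤ Fintype.card V := by
    rw [← Finset.card_union_of_disjoint hdisj2]
    exact le_trans (Finset.card_le_univ _) (le_of_eq (Finset.card_univ))
  rcases Nat.eq_or_lt_of_le hk with hk1 | hk2
  · -- k = 1
    have h0 : (L 0).card = 1 := by rw [hL0, Finset.card_singleton]
    rw [← hk1] at htot ⊢
    norm_num at htot ⊢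
    omega
  · have b1 := hLbound (k - 1) (by omega) (by omega)
    have b2 := hLbound k (by omega) (le_refl k)
    obtain ⟨m, rfl⟩ : ∃ m, k = m + 2 := ⟨k - 2, by omega⟩
    have h1 : (m + 2) - 1 - 1 = m := by omega
    have h2 : (m + 2) - 1 = m + 1 := by omega
    rw [h1, h2] at b1
    rw [h2] at b2
    rw [h2] at htot
    have e8 : 2 ^ (m + 2 + 1) = 8 * 2 ^ m := by ring
    have e2 : 2 ^ (m + 1) = 2 * 2 ^ m := by ring
    omega

open Finset in
lemma exists_good_subset [Fintype V] [DecidableEq V] (G : SimpleGraph V) [DecidableRel G.Adj] :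
    ∀ S : Finset V,
      2 * S.card < (G.edgeFinset.filter (fun e => ∀ x ∈ e, x ∈ S)).card →
      ∃ T : Finset V, T.Nonempty ∧
        ∀ a ∈ T, 3 ≤ (T.filter (fun b => G.Adj a b)).card := by
  classical
  intro S
  induction S using Finset.strongInduction with
  | _ S ih =>
    intro hS
    by_cases hall : ∀ a ∈ S, 3 ≤ (S.filter (fun b => G.Adj a b)).card
    · refine ⟨S, ?_, hall⟩
      have hpos : 0 < (G.edgeFinset.filter (fun e => ∀ x ∈ e, x ∈ S)).card := by omega
      obtain ⟨e, he⟩ := Finset.card_pos.mp hpos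
      rw [Finset.mem_filter] at he
      exact ⟨e.out.1, he.2 _ (Sym2.out_fst_mem e)⟩
    · push_neg at hall
      obtain ⟨a, haS, hdeg⟩ := hall
      set S' := S.erase a with hS'def
      have hsub : G.edgeFinset.filter (fun e => ∀ x ∈ e, x ∈ S) ⊆
          (G.edgeFinset.filter (fun e => ∀ x ∈ e, x ∈ S')) ∪
            ((S.filter (fun b => G.Adj a b)).image (fun b => s(a, b))) := by
        intro e he
        rw [Finset.mem_filter] at he
        by_cases ha : a ∈ e
        · apply Finset.mem_union_right
          rw [Finset.mem_image]
          refine ⟨Sym2.Mem.other ha, ?_, Sym2.other_spec ha⟩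
          rw [Finset.mem_filter]
          refine ⟨he.2 _ (Sym2.other_mem ha), ?_⟩
          have hee : e ∈ G.edgeSet := SimpleGraph.mem_edgeFinset.mp he.1
          rw [← Sym2.other_spec ha] at hee
          exact hee
        · apply Finset.mem_union_left
          rw [Finset.mem_filter]
          refine ⟨he.1, fun x hx => ?_⟩
          rw [hS'def, Finset.mem_erase]
          exact ⟨fun hxa => ha (hxa ▸ hx), he.2 x hx⟩
      have himg : ((S.filter (fun b => G.Adj a b)).image (fun b => s(a, b))).card ≤ 2 :=
        le_trans Finset.card_image_le (by omega)
      have hcard := Finset.card_le_card hsub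
      have hcu := Finset.card_union_le (G.edgeFinset.filter (fun e => ∀ x ∈ e, x ∈ S'))
        ((S.filter (fun b => G.Adj a b)).image (fun b => s(a, b)))
      have hScard : S'.card + 1 = S.card := Finset.card_erase_add_one haS
      have hS'2 : 2 * S'.card < (G.edgeFinset.filter (fun e => ∀ x ∈ e, x ∈ S')).card := by
        omega
      exact ih S' (Finset.erase_ssubset haS) hS'2


end ShortCycleAux


/-- Every finite simple undirected graph on `n` vertices with strictly more than `2n`
edges contains a cycle of length at most `2 · log₂ n`. -/
theorem many_edges_short_cycle {V : Type*} [Fintype V] [DecidableEq V]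
    (G : SimpleGraph V) [DecidableRel G.Adj]
    (hm : 2 * Fintype.card V < G.edgeFinset.card) :
    ∃ (v : V) (w : G.Walk v v), w.IsCycle ∧
      (w.length : ℝ) ≤ 2 * Real.logb 2 (Fintype.card V) := by
  classical
  obtain ⟨T, hTne, hdegT⟩ := ShortCycleAux.exists_good_subset G Finset.univ (by
    rw [Finset.filter_true_of_mem (fun e _ x _ => Finset.mem_univ x), Finset.card_univ]
    exact hm)
  set G' : SimpleGraph V :=
    { Adj := fun a b => a ∈ T ∧ b ∈ T ∧ G.Adj a b,
      symm := ⟨by rintro a b ⟨ha, hb, hab⟩; exact ⟨hb, ha, hab.symm⟩⟩,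
      loopless := ⟨by rintro a ⟨-, -, h⟩; exact G.loopless.irrefl a h⟩ } with hG'def
  haveI : DecidableRel G'.Adj := Classical.decRel _
  have hle : G' ≤ G := fun a b h => h.2.2
  have hadjT : ∀ a b, G'.Adj a b → a ∈ T := fun a b h => h.1
  have hdeg' : ∀ a ∈ T, 3 ≤ (Finset.univ.filter (G'.Adj a)).card := by
    intro a ha
    refine le_trans (hdegT a ha) (Finset.card_le_card ?_)
    intro b hb
    rw [Finset.mem_filter] at hb ⊢
    exact ⟨Finset.mem_univ b, ha, hb.1, hb.2⟩
  obtain ⟨v, hv⟩ := hTne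
  have hPbig : ∃ k : ℕ, ∃ (x : V) (c : G'.Walk x x), c.IsCycle ∧ c.length ≤ 2 * k := by
    refine ⟨Fintype.card V + 1, ?_⟩
    by_contra hnc
    push_neg at hnc
    have h2 := ShortCycleAux.core G' T hadjT hdeg' hv (k := Fintype.card V + 1) (Nat.le_add_left 1 _)
      (fun x c hc hlen => by have := hnc x c hc; omega)
    have h3 : Fintype.card V < 2 ^ Fintype.card V := Nat.lt_two_pow_self
    have h4 : (2:ℕ) ^ Fintype.card V ≤ 2 ^ (Fintype.card V + 1 + 1) :=
      Nat.pow_le_pow_right (by norm_num) (by omega)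
    omega
  set k₀ := Nat.find hPbig with hk₀def
  obtain ⟨x, c, hc, hlen⟩ := Nat.find_spec hPbig
  have hk₀2 : 2 ≤ k₀ := by
    have := hc.three_le_length
    omega
  have hmin := Nat.find_min hPbig (m := k₀ - 1) (by omega)
  push_neg at hmin
  have hcount : 2 ^ (k₀ - 1 + 1) ≤ Fintype.card V :=
    ShortCycleAux.core G' T hadjT hdeg' hv (by omega)
      (fun y d hd hld => by have := hmin y d hd; omega)
  have hpow : 2 ^ k₀ ≤ Fintype.card V := by
    have he : k₀ - 1 + 1 = k₀ := by omega
    rwa [he] at hcount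
  refine ⟨x, c.mapLe hle, hc.mapLe hle, ?_⟩
  have hlenmap : (c.mapLe hle).length = c.length := SimpleGraph.Walk.length_map _ _
  rw [hlenmap]
  have h2r : ((2:ℝ) ^ k₀) ≤ (Fintype.card V : ℝ) := by exact_mod_cast hpow
  have hkle : (k₀ : ℝ) ≤ Real.logb 2 (Fintype.card V) := by
    calc (k₀ : ℝ) = Real.logb 2 (2 ^ k₀) := by
          rw [Real.logb_pow, Real.logb_self_eq_one (by norm_num), mul_one]
      _ ≤ Real.logb 2 (Fintype.card V) :=
          Real.logb_le_logb_of_le (by norm_num) (by positivity) h2r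
  have hclen : (c.length : ℝ) ≤ 2 * (k₀ : ℝ) := by exact_mod_cast hlen
  linarith
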